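/- For all non-negative integers m, n, m°, n° there exists a constant C > 0 depending only on m, n, m°, n° such that for every integer N ≥ 2 with ε = 1/N and all integers i' ≥ 0, j' ≥ 0 with i' + j' ≥ 1: | (sin^m(π i' ε)·sin^n(π j' ε)/ε^{m+n})·cos^{m°}(π i' ε)·cos^{n°}(π j' ε) − (π i')^m·(π j')^n | is bounded by C·ε²·(j')^{n+2} if m = m° = 0 and n ≥ 1; by C·ε²·(i')^{m+2} if m ≥ 1 and n = n° = 0; and by C·ε²·( (i')^{m+2}·(j')^{n} + (i')^{m}·(j')^{n+2} ) in all remaining cases. -/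

import Mathlib

noncomputable section
open Real

/-- ε = 1/N -/
def eps (N : ℕ) : ℝ := 1 / N

/-- Lemma `sin cos`: for all non-negative integers m, n, m°, n°
there is C > 0 depending only on m, n, m°, n° such that for every N ≥ 2
(ε = 1/N) and all integers i' ≥ 0, j' ≥ 0 with i' + j' ≥ 1, the quantity
| sin^m(π i' ε) sin^n(π j' ε) / ε^(m+n) · cos^{m°}(π i' ε) cos^{n°}(π j' ε)
  − (π i')^m (π j')^n |
is bounded by C ε² (j')^{n+2} if m = m° = 0 and n ≥ 1, by C ε² (i')^{m+2} if
m ≥ 1 and n = n° = 0, and by C ε² ((i')^{m+2} (j')^n + (i')^m (j')^{n+2})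
otherwise. (Zeroth powers equal 1, in particular 0⁰ = 1.) -/
lemma sin_close (x : ℝ) (h0 : 0 ≤ x) (h1 : x ≤ 1) : |Real.sin x - x| ≤ x ^ 3 := by
  rcases eq_or_lt_of_le h0 with h | h
  · simp [← h]
  · have hu : Real.sin x ≤ x := by
      have := Real.abs_sin_le_abs (x := x); rw [abs_of_nonneg h0] at this
      exact (abs_le.1 this).2
    have hl := Real.sin_gt_sub_cube h
    have hx3 : 0 ≤ x ^ 3 := by positivity
    rw [abs_le]; constructor <;> nlinarith

lemma cos_close (x : ℝ) : |Real.cos x - 1| ≤ x ^ 2 := by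
  have h1 := Real.cos_le_one x
  have h2 := Real.one_sub_sq_div_two_le_cos (x := x)
  have : 0 ≤ x ^ 2 := sq_nonneg x
  rw [abs_le]; constructor <;> nlinarith

lemma abs_sin_le (x : ℝ) (h0 : 0 ≤ x) : |Real.sin x| ≤ x := by
  have := Real.abs_sin_le_abs (x := x); rwa [abs_of_nonneg h0] at this

lemma keySmall (a b : ℕ) : ∃ C > 0, ∀ x : ℝ, 0 ≤ x → x ≤ 1 →
    |Real.sin x ^ a * Real.cos x ^ b - x ^ a| ≤ C * x ^ (a + 2) := by
  induction a with
  | zero =>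
    induction b with
    | zero => exact ⟨1, one_pos, by intro x h0 h1; simp [pow_nonneg h0]⟩
    | succ b ih =>
      obtain ⟨C, hC, hb⟩ := ih
      refine ⟨C + 1, by positivity, fun x h0 h1 => ?_⟩
      have key : Real.sin x ^ 0 * Real.cos x ^ (b + 1) - x ^ 0
          = Real.cos x * (Real.sin x ^ 0 * Real.cos x ^ b - x ^ 0)
            + (Real.cos x - 1) := by ring
      rw [key]
      calc |Real.cos x * (Real.sin x ^ 0 * Real.cos x ^ b - x ^ 0) + (Real.cos x - 1)|
          ≤ |Real.cos x| * |Real.sin x ^ 0 * Real.cos x ^ b - x ^ 0| + |Real.cos x - 1| := by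
            rw [← abs_mul]; exact abs_add_le _ _
        _ ≤ 1 * (C * x ^ (0 + 2)) + x ^ 2 :=
            add_le_add (mul_le_mul (Real.abs_cos_le_one x) (hb x h0 h1) (abs_nonneg _)
              zero_le_one) (cos_close x)
        _ = (C + 1) * x ^ (0 + 2) := by ring
  | succ a ih =>
    obtain ⟨C, hC, ha⟩ := ih
    refine ⟨C + 1, by positivity, fun x h0 h1 => ?_⟩
    have key : Real.sin x ^ (a + 1) * Real.cos x ^ b - x ^ (a + 1)
        = Real.sin x * (Real.sin x ^ a * Real.cos x ^ b - x ^ a)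
          + x ^ a * (Real.sin x - x) := by ring
    rw [key]
    calc |Real.sin x * (Real.sin x ^ a * Real.cos x ^ b - x ^ a) + x ^ a * (Real.sin x - x)|
        ≤ |Real.sin x| * |Real.sin x ^ a * Real.cos x ^ b - x ^ a|
          + |x ^ a| * |Real.sin x - x| := by
          rw [← abs_mul, ← abs_mul]; exact abs_add_le _ _
      _ ≤ x * (C * x ^ (a + 2)) + x ^ a * x ^ 3 := by
          refine add_le_add (mul_le_mul (abs_sin_le x h0) (ha x h0 h1) (abs_nonneg _) h0) ?_
          rw [abs_of_nonneg (pow_nonneg h0 a)]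
          exact mul_le_mul_of_nonneg_left (sin_close x h0 h1) (pow_nonneg h0 a)
      _ = (C + 1) * x ^ (a + 1 + 2) := by ring

lemma keyAll (a b : ℕ) : ∃ C > 0, ∀ x : ℝ, 0 ≤ x →
    |Real.sin x ^ a * Real.cos x ^ b - x ^ a| ≤ C * x ^ (a + 2) := by
  obtain ⟨C, hC, hs⟩ := keySmall a b
  refine ⟨C + 2, by positivity, fun x h0 => ?_⟩
  rcases le_or_gt x 1 with h1 | h1
  · exact (hs x h0 h1).trans (by nlinarith [pow_nonneg h0 (a + 2)])
  · have hx1 : (1:ℝ) ≤ x := h1.le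
    have h2 : (1:ℝ) ≤ x ^ (a + 2) := one_le_pow₀ hx1
    have h3 : x ^ a ≤ x ^ (a + 2) := pow_le_pow_right₀ hx1 (by omega)
    have h4 : |Real.sin x ^ a * Real.cos x ^ b| ≤ 1 := by
      rw [abs_mul, abs_pow, abs_pow]
      exact mul_le_one₀ (pow_le_one₀ (abs_nonneg _) (Real.abs_sin_le_one x))
        (by positivity) (pow_le_one₀ (abs_nonneg _) (Real.abs_cos_le_one x))
    calc |Real.sin x ^ a * Real.cos x ^ b - x ^ a|
        ≤ |Real.sin x ^ a * Real.cos x ^ b| + |x ^ a| := abs_sub _ _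
      _ ≤ 1 + x ^ (a + 2) := add_le_add h4 (by rw [abs_of_nonneg (pow_nonneg h0 a)]; exact h3)
      _ ≤ (C + 2) * x ^ (a + 2) := by nlinarith [pow_nonneg h0 (a+2)]

theorem sin_cos_estimate (m n m' n' : ℕ) :
    ∃ C > 0, ∀ N : ℕ, 2 ≤ N → ∀ i j : ℤ, 0 ≤ i → 0 ≤ j → 1 ≤ i + j →
      |Real.sin (π * i * eps N) ^ m * Real.sin (π * j * eps N) ^ n / (eps N) ^ (m + n)
          * Real.cos (π * i * eps N) ^ m' * Real.cos (π * j * eps N) ^ n'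
        - (π * i) ^ m * (π * j) ^ n|
      ≤ if m = 0 ∧ m' = 0 ∧ 1 ≤ n then C * (eps N)^2 * (j:ℝ)^(n+2)
        else if 1 ≤ m ∧ n = 0 ∧ n' = 0 then C * (eps N)^2 * (i:ℝ)^(m+2)
        else C * (eps N)^2 * ((i:ℝ)^(m+2) * (j:ℝ)^n + (i:ℝ)^m * (j:ℝ)^(n+2)) := by
  obtain ⟨C1, hC1, h1⟩ := keyAll m m'
  obtain ⟨C2, hC2, h2⟩ := keyAll n n'
  refine ⟨π ^ (m + n + 2) * max C1 C2, by positivity, ?_⟩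
  intro N hN i j hi hj hij
  have hNpos : (0:ℝ) < N := by exact_mod_cast (by omega : 0 < N)
  have hε : 0 < eps N := by unfold eps; positivity
  set e := eps N with hedef
  have hi0 : (0:ℝ) ≤ (i:ℝ) := by exact_mod_cast hi
  have hj0 : (0:ℝ) ≤ (j:ℝ) := by exact_mod_cast hj
  set x := π * i * e with hxdef
  set y := π * j * e with hydef
  have hx0 : 0 ≤ x := by
    rw [hxdef]; exact mul_nonneg (mul_nonneg Real.pi_pos.le hi0) hε.le
  have hy0 : 0 ≤ y := by
    rw [hydef]; exact mul_nonneg (mul_nonneg Real.pi_pos.le hj0) hε.le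
  have hA := h1 x hx0
  have hB := h2 y hy0
  have hAabs : |Real.sin x ^ m * Real.cos x ^ m'| ≤ x ^ m := by
    rw [abs_mul, abs_pow, abs_pow]
    calc |Real.sin x| ^ m * |Real.cos x| ^ m' ≤ x ^ m * 1 := by
          refine mul_le_mul (pow_le_pow_left₀ (abs_nonneg _) (abs_sin_le x hx0) m)
            (pow_le_one₀ (abs_nonneg _) (Real.abs_cos_le_one x)) (by positivity) (pow_nonneg hx0 m)
      _ = x ^ m := mul_one _
  have hne : e ≠ 0 := hε.ne'
  split_ifs with hc1 hc2
  · obtain ⟨hm, hm', hn⟩ := hc1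
    subst hm; subst hm'
    simp only [pow_zero, one_mul, mul_one, zero_add]
    have hrw : Real.sin y ^ n / e ^ n * Real.cos y ^ n' - (π * j) ^ n
        = (Real.sin y ^ n * Real.cos y ^ n' - y ^ n) / e ^ n := by
      rw [hydef, mul_pow]; field_simp; ring
    rw [hrw, abs_div, abs_of_pos (pow_pos hε n), div_le_iff₀ (pow_pos hε n)]
    refine hB.trans ?_
    have : C2 * y ^ (n + 2) = C2 * (π ^ (n + 2) * (j:ℝ) ^ (n + 2) * (e ^ n * e ^ 2)) := by
      rw [hydef, mul_pow, mul_pow]; ring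
    rw [this]
    calc C2 * (π ^ (n + 2) * (j:ℝ) ^ (n + 2) * (e ^ n * e ^ 2))
        ≤ max C1 C2 * (π ^ (n + 2) * (j:ℝ) ^ (n + 2) * (e ^ n * e ^ 2)) := by
          refine mul_le_mul_of_nonneg_right (le_max_right _ _) ?_
          have : (0:ℝ) ≤ (j:ℝ) ^ (n + 2) := pow_nonneg hj0 _
          positivity
      _ = π ^ (n + 2) * max C1 C2 * e ^ 2 * (j:ℝ) ^ (n + 2) * e ^ n := by ring
  · obtain ⟨hm, hn, hn'⟩ := hc2
    subst hn; subst hn'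
    simp only [pow_zero, one_mul, mul_one, add_zero]
    have hrw : Real.sin x ^ m / e ^ m * Real.cos x ^ m' - (π * i) ^ m
        = (Real.sin x ^ m * Real.cos x ^ m' - x ^ m) / e ^ m := by
      rw [hxdef, mul_pow]; field_simp; ring
    rw [hrw, abs_div, abs_of_pos (pow_pos hε m), div_le_iff₀ (pow_pos hε m)]
    refine hA.trans ?_
    have : C1 * x ^ (m + 2) = C1 * (π ^ (m + 2) * (i:ℝ) ^ (m + 2) * (e ^ m * e ^ 2)) := by
      rw [hxdef, mul_pow, mul_pow]; ring
    rw [this]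
    calc C1 * (π ^ (m + 2) * (i:ℝ) ^ (m + 2) * (e ^ m * e ^ 2))
        ≤ max C1 C2 * (π ^ (m + 2) * (i:ℝ) ^ (m + 2) * (e ^ m * e ^ 2)) := by
          refine mul_le_mul_of_nonneg_right (le_max_left _ _) ?_
          have : (0:ℝ) ≤ (i:ℝ) ^ (m + 2) := pow_nonneg hi0 _
          positivity
      _ = π ^ (m + 0 + 2) * max C1 C2 * e ^ 2 * (i:ℝ) ^ (m + 2) * e ^ m := by ring
  · have hE : Real.sin x ^ m * Real.sin y ^ n / e ^ (m + n) * Real.cos x ^ m' * Real.cos y ^ n'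
        - (π * i) ^ m * (π * j) ^ n
        = (Real.sin x ^ m * Real.cos x ^ m' * (Real.sin y ^ n * Real.cos y ^ n')
            - x ^ m * y ^ n) / e ^ (m + n) := by
      have hxy : x ^ m * y ^ n = (π * i) ^ m * (π * j) ^ n * e ^ (m + n) := by
        rw [hxdef, hydef, mul_pow, mul_pow, pow_add]; ring
      rw [hxy]; field_simp
    rw [hE, abs_div, abs_of_pos (pow_pos hε (m + n)), div_le_iff₀ (pow_pos hε (m + n))]
    have step1 : |Real.sin x ^ m * Real.cos x ^ m' * (Real.sin y ^ n * Real.cos y ^ n')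
        - x ^ m * y ^ n|
        ≤ x ^ m * (C2 * y ^ (n + 2)) + y ^ n * (C1 * x ^ (m + 2)) := by
      have hsplit : Real.sin x ^ m * Real.cos x ^ m' * (Real.sin y ^ n * Real.cos y ^ n')
          - x ^ m * y ^ n
          = (Real.sin x ^ m * Real.cos x ^ m') * (Real.sin y ^ n * Real.cos y ^ n' - y ^ n)
            + y ^ n * (Real.sin x ^ m * Real.cos x ^ m' - x ^ m) := by ring
      rw [hsplit]
      calc _ ≤ |Real.sin x ^ m * Real.cos x ^ m'| * |Real.sin y ^ n * Real.cos y ^ n' - y ^ n|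
            + |y ^ n| * |Real.sin x ^ m * Real.cos x ^ m' - x ^ m| := by
            rw [← abs_mul, ← abs_mul]; exact abs_add_le _ _
        _ ≤ x ^ m * (C2 * y ^ (n + 2)) + y ^ n * (C1 * x ^ (m + 2)) := by
            refine add_le_add (mul_le_mul hAabs hB (abs_nonneg _) (pow_nonneg hx0 m)) ?_
            rw [abs_of_nonneg (pow_nonneg hy0 n)]
            exact mul_le_mul_of_nonneg_left hA (pow_nonneg hy0 n)
    refine step1.trans ?_
    have hq : (0:ℝ) ≤ π ^ (m + n + 2) * ((i:ℝ) ^ m * (j:ℝ) ^ (n + 2)) * (e ^ (m + n) * e ^ 2) := by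
      have := pow_nonneg hi0 m; have := pow_nonneg hj0 (n + 2); positivity
    have hq2 : (0:ℝ) ≤ π ^ (m + n + 2) * ((i:ℝ) ^ (m + 2) * (j:ℝ) ^ n) * (e ^ (m + n) * e ^ 2) := by
      have := pow_nonneg hi0 (m + 2); have := pow_nonneg hj0 n; positivity
    calc x ^ m * (C2 * y ^ (n + 2)) + y ^ n * (C1 * x ^ (m + 2))
        = C2 * (π ^ (m + n + 2) * ((i:ℝ) ^ m * (j:ℝ) ^ (n + 2)) * (e ^ (m + n) * e ^ 2))
          + C1 * (π ^ (m + n + 2) * ((i:ℝ) ^ (m + 2) * (j:ℝ) ^ n) * (e ^ (m + n) * e ^ 2)) := by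
          rw [hxdef, hydef, mul_pow, mul_pow, mul_pow, mul_pow]; ring
      _ ≤ max C1 C2 * (π ^ (m + n + 2) * ((i:ℝ) ^ m * (j:ℝ) ^ (n + 2)) * (e ^ (m + n) * e ^ 2))
          + max C1 C2 * (π ^ (m + n + 2) * ((i:ℝ) ^ (m + 2) * (j:ℝ) ^ n) * (e ^ (m + n) * e ^ 2)) :=
          add_le_add (mul_le_mul_of_nonneg_right (le_max_right _ _) hq)
            (mul_le_mul_of_nonneg_right (le_max_left _ _) hq2)
      _ = π ^ (m + n + 2) * max C1 C2 * e ^ 2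
          * ((i:ℝ) ^ (m + 2) * (j:ℝ) ^ n + (i:ℝ) ^ m * (j:ℝ) ^ (n + 2)) * e ^ (m + n) := by ring
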